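/- arXiv:1307.1670 — 7 statements merged into one kernel-verified Lean document; each statement's English description precedes it below -/
import Mathlib

section
/- Let x : ℝ → Fin N → Fin M → ℝ be differentiable and satisfy the graph replicator equation (d/dt) x(t) v s = F v s (x(t)) for all t, v, s. If for every vertex v the initial row sums to one, ∑_s x(0) v s = 1, then for every t ∈ ℝ and every vertex v one has ∑_s x(t) v s = ∑_s x(0) v s = 1. -/
open Finset Filter

/-- Expected payoff of pure strategy `s` at vertex `v` in state `x`. -/
noncomputable def pGraph {N M : ℕ} (a : Fin N → Fin N → ℝ)
    (B : Fin N → Matrix (Fin M) (Fin M) ℝ)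
    (v : Fin N) (s : Fin M) (x : Fin N → Fin M → ℝ) : ℝ :=
  ∑ r, B v s r * ((1 / ∑ w, a v w) * ∑ w, a v w * x w r)

/-- Average payoff at vertex `v` in state `x`. -/
noncomputable def phiGraph {N M : ℕ} (a : Fin N → Fin N → ℝ)
    (B : Fin N → Matrix (Fin M) (Fin M) ℝ)
    (v : Fin N) (x : Fin N → Fin M → ℝ) : ℝ :=
  ∑ s, x v s * pGraph a B v s x

/-- Graph replicator vector field. -/
noncomputable def FGraph {N M : ℕ} (a : Fin N → Fin N → ℝ)
    (B : Fin N → Matrix (Fin M) (Fin M) ℝ)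
    (v : Fin N) (s : Fin M) (x : Fin N → Fin M → ℝ) : ℝ :=
  x v s * (pGraph a B v s x - phiGraph a B v x)

theorem rowSum_invariant
    (N M : ℕ) (hN : 1 ≤ N) (hM : 1 ≤ M)
    (a : Fin N → Fin N → ℝ)
    (ha : ∀ v w, 0 ≤ a v w) (haa : ∀ v, a v v = 0)
    (hd : ∀ v, 0 < ∑ w, a v w)
    (B : Fin N → Matrix (Fin M) (Fin M) ℝ)
    (x : ℝ → Fin N → Fin M → ℝ)
    (hdiff : ∀ v s, Differentiable ℝ (fun t => x t v s))
    (hode : ∀ t v s, deriv (fun τ => x τ v s) t = FGraph a B v s (x t))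
    (hinit : ∀ v, ∑ s, x 0 v s = 1) :
    ∀ (t : ℝ) (v : Fin N),
      (∑ s, x t v s = ∑ s, x 0 v s) ∧ (∑ s, x t v s = 1) := by
  have main : ∀ (t : ℝ) (v : Fin N), ∑ s, x t v s = 1 := by
    intro t v
    set S : ℝ → ℝ := fun t => ∑ s, x t v s with hSdef
    set φ : ℝ → ℝ := fun t => phiGraph a B v (x t) with hφdef
    -- S has derivative φ t * (1 - S t)
    have hS : ∀ τ, HasDerivAt S (φ τ * (1 - S τ)) τ := by
      intro τ
      have h1 : HasDerivAt S (∑ s, FGraph a B v s (x τ)) τ := by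
        have := HasDerivAt.fun_sum (u := Finset.univ)
          (fun s _ => (hode τ v s ▸ ((hdiff v s).differentiableAt.hasDerivAt) :
            HasDerivAt (fun τ => x τ v s) (FGraph a B v s (x τ)) τ))
        simpa [hSdef] using this
      convert h1 using 1
      simp only [FGraph, hφdef, hSdef]
      rw [Finset.sum_congr rfl (fun s _ => mul_sub (x τ v s) _ _),
        Finset.sum_sub_distrib, ← Finset.sum_mul]
      simp [phiGraph]
      ring
    -- φ is continuous
    have hxc : ∀ w r, Continuous (fun t => x t w r) := fun w r => (hdiff w r).continuous
    have hφc : Continuous φ := by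
      simp only [hφdef, phiGraph, pGraph]
      continuity
    -- antiderivative of φ
    set Φ : ℝ → ℝ := fun t => ∫ τ in (0:ℝ)..t, φ τ with hΦdef
    have hΦ : ∀ τ, HasDerivAt Φ (φ τ) τ := by
      intro τ
      exact intervalIntegral.integral_hasDerivAt_right
        (hφc.intervalIntegrable _ _)
        (hφc.stronglyMeasurableAtFilter _ _)
        hφc.continuousAt
    set h : ℝ → ℝ := fun t => (S t - 1) * Real.exp (Φ t) with hhdef
    have hh : ∀ τ, HasDerivAt h 0 τ := by
      intro τ
      have := ((hS τ).sub_const 1).fun_mul ((hΦ τ).exp)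
      refine this.congr_deriv ?_
      ring
    have hconst : ∀ τ, h τ = h 0 := by
      intro τ
      exact is_const_of_deriv_eq_zero
        (fun t => (hh t).differentiableAt) (fun t => (hh t).deriv) τ 0
    have h0 : h 0 = 0 := by
      simp [hhdef, hSdef, hinit v]
    have := hconst t
    rw [h0, hhdef] at this
    have hE : Real.exp (Φ t) ≠ 0 := Real.exp_ne_zero _
    have : S t - 1 = 0 := by
      rcases mul_eq_zero.mp this with h' | h'
      · exact h'
      · exact absurd h' hE
    linarith [this]
  intro t v
  exact ⟨by rw [main t v, main 0 v], main t v⟩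
end

section
/- Let x : ℝ → Fin N → Fin M → ℝ be differentiable and satisfy the graph replicator equation (d/dt) x(t) v s = F v s (x(t)) for all t, v, s. If there exist a vertex v, a strategy s and a time t₁ with x(t₁) v s = 0, then x(t) v s = 0 for all t ∈ ℝ (the faces {x v s = 0} are invariant: since the vector field is polynomial, solutions are unique, and the function obtained by setting that component identically to zero is again a solution). -/
open Finset Filter

theorem face_invariant
    (N M : ℕ) (hN : 1 ≤ N) (hM : 1 ≤ M)
    (a : Fin N → Fin N → ℝ)
    (ha : ∀ v w, 0 ≤ a v w) (haa : ∀ v, a v v = 0)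
    (hd : ∀ v, 0 < ∑ w, a v w)
    (B : Fin N → Matrix (Fin M) (Fin M) ℝ)
    (x : ℝ → Fin N → Fin M → ℝ)
    (hdiff : ∀ v s, Differentiable ℝ (fun t => x t v s))
    (hode : ∀ t v s, deriv (fun τ => x τ v s) t = FGraph a B v s (x t))
    (v : Fin N) (s : Fin M) (t₁ : ℝ) (hzero : x t₁ v s = 0) :
    ∀ t : ℝ, x t v s = 0 := by
  set g : ℝ → ℝ := fun t => pGraph a B v s (x t) - phiGraph a B v (x t) with hg_def
  have hc : ∀ w r, Continuous fun t => x t w r := fun w r => (hdiff w r).continuous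
  have hgc : Continuous g := by
    unfold g
    unfold pGraph phiGraph
    continuity
  set G : ℝ → ℝ := fun t => ∫ τ in t₁..t, g τ with hG_def
  have hGd : ∀ t, HasDerivAt G (g t) t := fun t =>
    intervalIntegral.integral_hasDerivAt_right (hgc.intervalIntegrable t₁ t)
      (hgc.stronglyMeasurableAtFilter _ _) hgc.continuousAt
  set h : ℝ → ℝ := fun t => x t v s * Real.exp (-G t) with hh_def
  have hyd : ∀ t, HasDerivAt (fun τ => x τ v s) (x t v s * g t) t := by
    intro t
    have := ((hdiff v s) t).hasDerivAt
    rwa [hode t v s, FGraph] at this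
  have hhd : ∀ t, HasDerivAt h 0 t := by
    intro t
    have h1 := (hyd t).mul (((hGd t).neg).exp)
    have : x t v s * g t * Real.exp (-G t) + x t v s * (Real.exp (-G t) * -g t) = 0 := by
      ring
    rw [Pi.neg_apply, this] at h1
    exact h1
  have hconst : ∀ t, h t = h t₁ := by
    intro t
    apply is_const_of_deriv_eq_zero (f := h)
    · exact fun τ => (hhd τ).differentiableAt
    · exact fun τ => (hhd τ).deriv
  intro t
  have := hconst t
  simp only [hh_def, hzero, zero_mul] at this
  have hexp : Real.exp (-G t) ≠ 0 := Real.exp_ne_zero _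
  exact (mul_eq_zero.mp this).resolve_right hexp
end

section
/- Invariance of the simplex: let x : ℝ → Fin N → Fin M → ℝ be differentiable and satisfy the graph replicator equation (d/dt) x(t) v s = F v s (x(t)) for all t, v, s. If x(0) v ∈ Δ_M for every vertex v (i.e. x(0) v s ≥ 0 for all s and ∑_s x(0) v s = 1), then x(t) v ∈ Δ_M for every vertex v and every t ≥ 0. -/
open Finset Filter

lemma lin_ode (u c : ℝ → ℝ) (hu : Differentiable ℝ u) (hc : Continuous c)
    (h : ∀ t, deriv u t = c t * u t) (t : ℝ) :
    u t = u 0 * Real.exp (∫ s in (0:ℝ)..t, c s) := by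
  set g : ℝ → ℝ := fun t => ∫ s in (0:ℝ)..t, c s with hg
  have hgd : ∀ t, HasDerivAt g (c t) t := fun t =>
    intervalIntegral.integral_hasDerivAt_right (hc.intervalIntegrable _ _)
      (hc.stronglyMeasurableAtFilter _ _) hc.continuousAt
  have hh : ∀ s, HasDerivAt (fun t => u t * Real.exp (-g t)) 0 s := by
    intro s
    have h1 : HasDerivAt u (c s * u s) s := (h s) ▸ (hu s).hasDerivAt
    have h2 : HasDerivAt (fun t => Real.exp (-g t)) (Real.exp (-g s) * (-c s)) s :=
      ((hgd s).neg).exp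
    have := h1.fun_mul h2
    exact this.congr_deriv (by ring)
  have hconst := is_const_of_deriv_eq_zero (f := fun t => u t * Real.exp (-g t))
    (fun s => (hh s).differentiableAt) (fun s => (hh s).deriv) t 0
  have hg0 : g 0 = 0 := by simp [hg]
  rw [hg0, neg_zero, Real.exp_zero, mul_one, Real.exp_neg, ← div_eq_mul_inv,
    div_eq_iff (Real.exp_ne_zero _)] at hconst
  exact hconst

theorem simplex_invariant
    (N M : ℕ) (hN : 1 ≤ N) (hM : 1 ≤ M)
    (a : Fin N → Fin N → ℝ)
    (ha : ∀ v w, 0 ≤ a v w) (haa : ∀ v, a v v = 0)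
    (hd : ∀ v, 0 < ∑ w, a v w)
    (B : Fin N → Matrix (Fin M) (Fin M) ℝ)
    (x : ℝ → Fin N → Fin M → ℝ)
    (hdiff : ∀ v s, Differentiable ℝ (fun t => x t v s))
    (hode : ∀ t v s, deriv (fun τ => x τ v s) t = FGraph a B v s (x t))
    (hinit : ∀ v, (∀ s, 0 ≤ x 0 v s) ∧ (∑ s, x 0 v s = 1)) :
    ∀ t : ℝ, 0 ≤ t → ∀ v : Fin N,
      (∀ s, 0 ≤ x t v s) ∧ (∑ s, x t v s = 1) := by
  have hxc : ∀ w r, Continuous fun t => x t w r := fun w r => (hdiff w r).continuous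
  have hpc : ∀ v s, Continuous fun t => pGraph a B v s (x t) := by
    intro v s
    unfold pGraph
    exact continuous_finset_sum _ fun r _ => continuous_const.mul
      (continuous_const.mul (continuous_finset_sum _ fun w _ => continuous_const.mul (hxc w r)))
  have hphic : ∀ v, Continuous fun t => phiGraph a B v (x t) := by
    intro v
    unfold phiGraph
    exact continuous_finset_sum _ fun s _ => (hxc v s).mul (hpc v s)
  intro t ht v
  constructor
  · intro s
    have key := lin_ode (fun t => x t v s)
      (fun t => pGraph a B v s (x t) - phiGraph a B v (x t))
      (hdiff v s) ((hpc v s).sub (hphic v))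
      (by intro τ; rw [hode τ v s]; unfold FGraph; ring) t
    rw [key]
    exact mul_nonneg ((hinit v).1 s) (Real.exp_pos _).le
  · have hS : Differentiable ℝ fun t => ∑ s, x t v s :=
      Differentiable.fun_sum fun s _ => hdiff v s
    have hSder : ∀ τ, HasDerivAt (fun t => ∑ s, x t v s)
        (∑ s, FGraph a B v s (x τ)) τ := by
      intro τ
      exact HasDerivAt.fun_sum fun s _ => (hode τ v s) ▸ ((hdiff v s) τ).hasDerivAt
    have hFsum : ∀ τ, ∑ s, FGraph a B v s (x τ)
        = phiGraph a B v (x τ) * (1 - ∑ s, x τ v s) := by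
      intro τ
      unfold FGraph
      simp only [mul_sub, Finset.sum_sub_distrib, ← Finset.sum_mul]
      rw [phiGraph]
      ring
    have key := lin_ode (fun t => 1 - ∑ s, x t v s)
      (fun t => -phiGraph a B v (x t))
      ((differentiable_const (1:ℝ)).sub hS) ((hphic v).neg)
      (by
        intro τ
        have := ((hasDerivAt_const τ (1:ℝ)).fun_sub (hSder τ)).deriv
        rw [this, hFsum τ]; ring) t
    have h0 : (1:ℝ) - ∑ s, x 0 v s = 0 := by rw [(hinit v).2]; ring
    rw [h0, zero_mul] at key
    linarith [key]
end

section
/- Lift of classical replicator solutions: suppose all payoff matrices coincide, B v = B for every vertex v. If y : ℝ → Fin M → ℝ is differentiable and solves the classical replicator equation (d/dt) y(t) s = y(t) s * ((∑_r B s r * y(t) r) − ∑_{s'} ∑_r y(t) s' * B s' r * y(t) r) for all t, s, then the homogeneous lift x(t) v := y(t) is a solution of the graph replicator equation: (d/dt) x(t) v s = F v s (x(t)) for all t, v, s. -/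
open Finset Filter

theorem classical_solution_lifts
    (N M : ℕ) (hN : 1 ≤ N) (hM : 1 ≤ M)
    (a : Fin N → Fin N → ℝ)
    (ha : ∀ v w, 0 ≤ a v w) (haa : ∀ v, a v v = 0)
    (hd : ∀ v, 0 < ∑ w, a v w)
    (B : Fin N → Matrix (Fin M) (Fin M) ℝ)
    (B₀ : Matrix (Fin M) (Fin M) ℝ)
    (hB : ∀ v, B v = B₀)
    (y : ℝ → Fin M → ℝ)
    (hdiff : ∀ s, Differentiable ℝ (fun t => y t s))
    (hode : ∀ t s, deriv (fun τ => y τ s) t =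
      y t s * ((∑ r, B₀ s r * y t r) -
        ∑ s', ∑ r, y t s' * B₀ s' r * y t r)) :
    ∀ (t : ℝ) (v : Fin N) (s : Fin M),
      deriv (fun τ => (fun w : Fin N => y τ) v s) t =
        FGraph a B v s (fun _ : Fin N => y t) := by
  intro t v s
  have hp : ∀ s, pGraph a B v s (fun _ : Fin N => y t) = ∑ r, B₀ s r * y t r := by
    intro s
    unfold pGraph
    refine Finset.sum_congr rfl fun r _ => ?_
    rw [hB, ← Finset.sum_mul, one_div, inv_mul_cancel_left₀ (hd v).ne']
  show deriv (fun τ => y τ s) t = _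
  rw [hode, FGraph, phiGraph, hp]
  congr 1
  congr 1
  refine Finset.sum_congr rfl fun s' _ => ?_
  rw [hp, Finset.mul_sum]
  refine Finset.sum_congr rfl fun r _ => ?_
  ring
end

section
/- Homogeneous initial conditions stay homogeneous: suppose all payoff matrices coincide, B v = B for every vertex v. If x : ℝ → Fin N → Fin M → ℝ is differentiable, solves the graph replicator equation (d/dt) x(t) v s = F v s (x(t)) for all t, v, s, and satisfies x(0) v = c for every vertex v and some c : Fin M → ℝ, then x(t) v = x(t) w for all vertices v, w and all t ∈ ℝ, and each trajectory t ↦ x(t) v solves the classical replicator equation ẏ_s = y_s((B y)_s − yᵀ B y) with y(0) = c. -/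
open Finset Filter

lemma double_single_le {α β : Type*} [Fintype α] [Fintype β] (f : α → β → ℝ)
    (hf : ∀ i j, 0 ≤ f i j) (i : α) (j : β) : f i j ≤ ∑ i', ∑ j', f i' j' :=
  le_trans (Finset.single_le_sum (fun j' _ => hf i j') (Finset.mem_univ j))
    (Finset.single_le_sum (fun i' _ => Finset.sum_nonneg fun j' _ => hf i' j')
      (Finset.mem_univ i))

lemma gron_zero {g g' : ℝ → ℝ} {K T : ℝ} (hT : 0 ≤ T)
    (hder : ∀ t, HasDerivAt g (g' t) t)
    (hb : ∀ t ∈ Set.Icc (0:ℝ) T, |g' t| ≤ K * |g t|)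
    (h0 : g 0 = 0) : g T = 0 := by
  have hcont : ContinuousOn g (Set.Icc 0 T) := fun t _ =>
    (hder t).continuousAt.continuousWithinAt
  have hderW : ∀ t ∈ Set.Ico (0:ℝ) T, HasDerivWithinAt g (g' t) (Set.Ici t) t :=
    fun t _ => (hder t).hasDerivWithinAt
  have hbb : ∀ t ∈ Set.Ico (0:ℝ) T, ‖g' t‖ ≤ K * ‖g t‖ + 0 := fun t ht => by
    simpa [Real.norm_eq_abs] using hb t ⟨ht.1, ht.2.le⟩
  have ha0 : ‖g 0‖ ≤ 0 := by simp [h0]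
  have h := norm_le_gronwallBound_of_norm_deriv_right_le hcont hderW ha0 hbb
  have h2 := h T (Set.right_mem_Icc.2 hT)
  rw [gronwallBound_ε0_δ0] at h2
  have h3 : |g T| ≤ 0 := by simpa [Real.norm_eq_abs] using h2
  exact abs_eq_zero.mp (le_antisymm h3 (abs_nonneg _))

lemma FGraph_diff_bound {N M : ℕ} (a : Fin N → Fin N → ℝ)
    (ha : ∀ v w, 0 ≤ a v w) (hd : ∀ v, 0 < ∑ w, a v w)
    (B : Fin N → Matrix (Fin M) (Fin M) ℝ) (B₀ : Matrix (Fin M) (Fin M) ℝ)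
    (hB : ∀ v, B v = B₀)
    (Cb R δ : ℝ) (hCb : 0 ≤ Cb) (hR : 0 ≤ R) (hδ : 0 ≤ δ)
    (hB0 : ∀ s r, |B₀ s r| ≤ Cb)
    (X : Fin N → Fin M → ℝ) (hX : ∀ v s, |X v s| ≤ R)
    (v₀ : Fin N) (hD : ∀ u r, |X u r - X v₀ r| ≤ δ)
    (v : Fin N) (s : Fin M) :
    |FGraph a B v s X - FGraph a B v₀ s X| ≤
      δ * (M*(Cb*R) + M*(R*(M*(Cb*R))))
        + R * (M*(Cb*(2*δ)) + M*(δ*(M*(Cb*R)) + R*(M*(Cb*(2*δ))))) := by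
  have hsum_const : ∀ C : ℝ, ∑ _r : Fin M, C = (M:ℝ)*C := fun C => by
    simp [Finset.sum_const, Finset.card_univ, nsmul_eq_mul]
  have havg : ∀ (u : Fin N) (f : Fin N → ℝ) (C : ℝ), (∀ w, |f w| ≤ C) →
      |(1 / ∑ w, a u w) * ∑ w, a u w * f w| ≤ C := by
    intro u f C hf
    have hdu := hd u
    rw [abs_mul, abs_of_pos (by positivity : (0:ℝ) < 1 / ∑ w, a u w)]
    have hS : |∑ w, a u w * f w| ≤ (∑ w, a u w) * C := by
      refine (Finset.abs_sum_le_sum_abs _ _).trans ?_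
      rw [Finset.sum_mul]
      refine Finset.sum_le_sum fun w _ => ?_
      rw [abs_mul, abs_of_nonneg (ha u w)]
      exact mul_le_mul_of_nonneg_left (hf w) (ha u w)
    calc (1 / ∑ w, a u w) * |∑ w, a u w * f w|
        ≤ (1 / ∑ w, a u w) * ((∑ w, a u w) * C) :=
          mul_le_mul_of_nonneg_left hS (by positivity)
      _ = C := by field_simp
  have hE : ∀ u r, |(1 / ∑ w, a u w) * (∑ w, a u w * X w r) - X v₀ r| ≤ δ := by
    intro u r
    have e0 : ∑ w, a u w * (X w r - X v₀ r)
        = (∑ w, a u w * X w r) - (∑ w, a u w) * X v₀ r := by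
      rw [Finset.sum_mul, ← Finset.sum_sub_distrib]
      exact Finset.sum_congr rfl fun w _ => by ring
    have e1 : (1 / ∑ w, a u w) * ∑ w, a u w * (X w r - X v₀ r)
        = (1 / ∑ w, a u w) * (∑ w, a u w * X w r) - X v₀ r := by
      rw [e0, mul_sub, one_div, inv_mul_cancel_left₀ (hd u).ne']
    rw [← e1]
    exact havg u _ δ fun w => hD w r
  have hEd : ∀ r, |(1 / ∑ w, a v w) * (∑ w, a v w * X w r)
      - (1 / ∑ w, a v₀ w) * (∑ w, a v₀ w * X w r)| ≤ 2*δ := by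
    intro r
    calc |(1 / ∑ w, a v w) * (∑ w, a v w * X w r)
          - (1 / ∑ w, a v₀ w) * (∑ w, a v₀ w * X w r)|
        ≤ |(1 / ∑ w, a v w) * (∑ w, a v w * X w r) - X v₀ r|
          + |X v₀ r - (1 / ∑ w, a v₀ w) * (∑ w, a v₀ w * X w r)| := abs_sub_le _ _ _
      _ ≤ δ + δ := add_le_add (hE v r) (by rw [abs_sub_comm]; exact hE v₀ r)
      _ = 2*δ := by ring
  have hPabs : ∀ u s', |pGraph a B u s' X| ≤ M*(Cb*R) := by
    intro u s'
    unfold pGraph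
    rw [hB]
    refine (Finset.abs_sum_le_sum_abs _ _).trans ?_
    refine le_trans (Finset.sum_le_sum fun r _ => ?_) (le_of_eq (hsum_const _))
    rw [abs_mul]
    exact mul_le_mul (hB0 _ _) (havg u (fun w => X w r) R fun w => hX w r)
      (abs_nonneg _) hCb
  have hPd : ∀ s', |pGraph a B v s' X - pGraph a B v₀ s' X| ≤ M*(Cb*(2*δ)) := by
    intro s'
    unfold pGraph
    rw [hB v, hB v₀, ← Finset.sum_sub_distrib]
    refine (Finset.abs_sum_le_sum_abs _ _).trans ?_
    refine le_trans (Finset.sum_le_sum fun r _ => ?_) (le_of_eq (hsum_const _))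
    rw [← mul_sub, abs_mul]
    exact mul_le_mul (hB0 _ _) (hEd r) (abs_nonneg _) hCb
  have hφabs : ∀ u, |phiGraph a B u X| ≤ M*(R*(M*(Cb*R))) := by
    intro u
    unfold phiGraph
    refine (Finset.abs_sum_le_sum_abs _ _).trans ?_
    refine le_trans (Finset.sum_le_sum fun s' _ => ?_) (le_of_eq (hsum_const _))
    rw [abs_mul]
    exact mul_le_mul (hX u s') (hPabs u s') (abs_nonneg _) hR
  have hφd : |phiGraph a B v X - phiGraph a B v₀ X|
      ≤ M*(δ*(M*(Cb*R)) + R*(M*(Cb*(2*δ)))) := by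
    unfold phiGraph
    rw [← Finset.sum_sub_distrib]
    refine (Finset.abs_sum_le_sum_abs _ _).trans ?_
    refine le_trans (Finset.sum_le_sum fun s' _ => ?_) (le_of_eq (hsum_const _))
    have e : X v s' * pGraph a B v s' X - X v₀ s' * pGraph a B v₀ s' X
        = (X v s' - X v₀ s') * pGraph a B v s' X
          + X v₀ s' * (pGraph a B v s' X - pGraph a B v₀ s' X) := by ring
    rw [e]
    refine (abs_add_le _ _).trans ?_
    rw [abs_mul, abs_mul]
    exact add_le_add (mul_le_mul (hD v s') (hPabs v s') (abs_nonneg _) hδ)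
      (mul_le_mul (hX v₀ s') (hPd s') (abs_nonneg _) hR)
  have e : FGraph a B v s X - FGraph a B v₀ s X
      = (X v s - X v₀ s) * (pGraph a B v s X - phiGraph a B v X)
        + X v₀ s * ((pGraph a B v s X - pGraph a B v₀ s X)
            - (phiGraph a B v X - phiGraph a B v₀ X)) := by
    unfold FGraph; ring
  rw [e]
  refine (abs_add_le _ _).trans ?_
  rw [abs_mul, abs_mul]
  have h1 : |pGraph a B v s X - phiGraph a B v X|
      ≤ M*(Cb*R) + M*(R*(M*(Cb*R))) :=
    (abs_sub _ _).trans (add_le_add (hPabs v s) (hφabs v))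
  have h2 : |(pGraph a B v s X - pGraph a B v₀ s X)
      - (phiGraph a B v X - phiGraph a B v₀ X)|
      ≤ M*(Cb*(2*δ)) + M*(δ*(M*(Cb*R)) + R*(M*(Cb*(2*δ)))) :=
    (abs_sub _ _).trans (add_le_add (hPd s) hφd)
  exact add_le_add (mul_le_mul (hD v s) h1 (abs_nonneg _) hδ)
    (mul_le_mul (hX v₀ s) h2 (abs_nonneg _) hR)

theorem homogeneous_stays_homogeneous
    (N M : ℕ) (hN : 1 ≤ N) (hM : 1 ≤ M)
    (a : Fin N → Fin N → ℝ)
    (ha : ∀ v w, 0 ≤ a v w) (haa : ∀ v, a v v = 0)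
    (hd : ∀ v, 0 < ∑ w, a v w)
    (B : Fin N → Matrix (Fin M) (Fin M) ℝ)
    (B₀ : Matrix (Fin M) (Fin M) ℝ)
    (hB : ∀ v, B v = B₀)
    (x : ℝ → Fin N → Fin M → ℝ)
    (hdiff : ∀ v s, Differentiable ℝ (fun t => x t v s))
    (hode : ∀ t v s, deriv (fun τ => x τ v s) t = FGraph a B v s (x t))
    (c : Fin M → ℝ)
    (hinit : ∀ v, x 0 v = c) :
    (∀ (t : ℝ) (v w : Fin N), x t v = x t w) ∧
    (∀ (v : Fin N),
      (∀ (t : ℝ) (s : Fin M),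
        deriv (fun τ => x τ v s) t =
          x t v s * ((∑ r, B₀ s r * x t v r) -
            ∑ s', ∑ r, x t v s' * B₀ s' r * x t v r)) ∧
      x 0 v = c) := by
  have v₀ : Fin N := ⟨0, hN⟩
  have hX : ∀ v s t, HasDerivAt (fun τ => x τ v s) (FGraph a B v s (x t)) t := by
    intro v s t
    have h := ((hdiff v s) t).hasDerivAt
    rwa [hode t v s] at h
  set g : ℝ → ℝ := fun t => ∑ v, ∑ s,
    (x t v s - x t v₀ s) * (x t v s - x t v₀ s) with hgdef
  set g' : ℝ → ℝ := fun t => ∑ v, ∑ s,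
    ((FGraph a B v s (x t) - FGraph a B v₀ s (x t)) * (x t v s - x t v₀ s)
      + (x t v s - x t v₀ s) * (FGraph a B v s (x t) - FGraph a B v₀ s (x t)))
    with hg'def
  have hgder : ∀ t, HasDerivAt g (g' t) t := by
    intro t
    refine HasDerivAt.fun_sum fun v _ => HasDerivAt.fun_sum fun s _ => ?_
    exact ((hX v s t).sub (hX v₀ s t)).mul ((hX v s t).sub (hX v₀ s t))
  have hg0 : g 0 = 0 := by
    refine Finset.sum_eq_zero fun v _ => Finset.sum_eq_zero fun s _ => ?_
    simp [hinit]
  have hgnn : ∀ t, 0 ≤ g t := fun t =>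
    Finset.sum_nonneg fun v _ => Finset.sum_nonneg fun s _ => mul_self_nonneg _
  have hsq : ∀ t v s, (x t v s - x t v₀ s) * (x t v s - x t v₀ s) ≤ g t :=
    fun t v s => double_single_le
      (fun v s => (x t v s - x t v₀ s) * (x t v s - x t v₀ s))
      (fun _ _ => mul_self_nonneg _) v s
  have habsD : ∀ t v s, |x t v s - x t v₀ s| ≤ Real.sqrt (g t) := by
    intro t v s
    rw [← Real.sqrt_mul_self_eq_abs]
    exact Real.sqrt_le_sqrt (hsq t v s)
  set Cb : ℝ := ∑ s, ∑ r, |B₀ s r| with hCbdef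
  have hCbnn : 0 ≤ Cb :=
    Finset.sum_nonneg fun s _ => Finset.sum_nonneg fun r _ => abs_nonneg _
  have hCbb : ∀ s r, |B₀ s r| ≤ Cb := fun s r =>
    double_single_le (fun s r => |B₀ s r|) (fun _ _ => abs_nonneg _) s r
  have hbnd : ∀ T : ℝ, ∃ R, 0 ≤ R ∧ ∀ t ∈ Set.Icc (-T) T, ∀ v s, |x t v s| ≤ R := by
    intro T
    have hc : ContinuousOn (fun t => ∑ v, ∑ s, |x t v s|) (Set.Icc (-T) T) :=
      (continuous_finset_sum _ fun v _ => continuous_finset_sum _ fun s _ =>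
        ((hdiff v s).continuous).abs).continuousOn
    obtain ⟨C, hC⟩ := (isCompact_Icc).exists_bound_of_continuousOn hc
    refine ⟨max C 0, le_max_right _ _, fun t ht v s => ?_⟩
    have h1 := double_single_le (fun v s => |x t v s|) (fun _ _ => abs_nonneg _) v s
    have h2 := hC t ht
    rw [Real.norm_eq_abs] at h2
    exact h1.trans ((le_abs_self _).trans (h2.trans (le_max_left _ _)))
  have hkey : ∀ T : ℝ, ∃ K', 0 ≤ K' ∧ ∀ t ∈ Set.Icc (-T) T, |g' t| ≤ K' * |g t| := by
    intro T
    obtain ⟨R, hR0, hRb⟩ := hbnd T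
    set K : ℝ := (M*(Cb*R) + M*(R*(M*(Cb*R))))
      + R * (M*(Cb*2) + M*((M*(Cb*R)) + R*(M*(Cb*2)))) with hKdef
    have hM0 : (0:ℝ) ≤ (M:ℝ) := Nat.cast_nonneg M
    have hN0 : (0:ℝ) ≤ (N:ℝ) := Nat.cast_nonneg N
    have hCR : 0 ≤ Cb*R := mul_nonneg hCbnn hR0
    have hMCR : 0 ≤ M*(Cb*R) := mul_nonneg hM0 hCR
    have hK0 : 0 ≤ K := by
      rw [hKdef]
      refine add_nonneg (add_nonneg hMCR (mul_nonneg hM0 (mul_nonneg hR0 hMCR)))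
        (mul_nonneg hR0 (add_nonneg
          (mul_nonneg hM0 (mul_nonneg hCbnn (by norm_num)))
          (mul_nonneg hM0 (add_nonneg hMCR (mul_nonneg hR0
            (mul_nonneg hM0 (mul_nonneg hCbnn (by norm_num))))))))
    refine ⟨(N:ℝ)*((M:ℝ)*(2*K)), mul_nonneg hN0 (mul_nonneg hM0 (by linarith)),
      fun t ht => ?_⟩
    have hst0 : 0 ≤ Real.sqrt (g t) := Real.sqrt_nonneg _
    have hFd : ∀ v s, |FGraph a B v s (x t) - FGraph a B v₀ s (x t)|
        ≤ K * Real.sqrt (g t) := by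
      intro v s
      have h := FGraph_diff_bound a ha hd B B₀ hB Cb R (Real.sqrt (g t))
        hCbnn hR0 hst0 hCbb (x t) (fun v s => hRb t ht v s) v₀
        (fun u r => habsD t u r) v s
      refine h.trans (le_of_eq ?_)
      rw [hKdef]; ring
    have hterm : ∀ v s,
        |(FGraph a B v s (x t) - FGraph a B v₀ s (x t)) * (x t v s - x t v₀ s)
          + (x t v s - x t v₀ s) * (FGraph a B v s (x t) - FGraph a B v₀ s (x t))|
        ≤ 2*K*(g t) := by
      intro v s
      have hstst : Real.sqrt (g t) * Real.sqrt (g t) = g t :=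
        Real.mul_self_sqrt (hgnn t)
      have h1 := (abs_add_le
        ((FGraph a B v s (x t) - FGraph a B v₀ s (x t)) * (x t v s - x t v₀ s))
        ((x t v s - x t v₀ s) * (FGraph a B v s (x t) - FGraph a B v₀ s (x t))))
      rw [abs_mul, abs_mul] at h1
      have h2 : |FGraph a B v s (x t) - FGraph a B v₀ s (x t)| * |x t v s - x t v₀ s|
          ≤ (K * Real.sqrt (g t)) * Real.sqrt (g t) :=
        mul_le_mul (hFd v s) (habsD t v s) (abs_nonneg _) (by positivity)
      have h3 : |x t v s - x t v₀ s| * |FGraph a B v s (x t) - FGraph a B v₀ s (x t)|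
          ≤ Real.sqrt (g t) * (K * Real.sqrt (g t)) :=
        mul_le_mul (habsD t v s) (hFd v s) (abs_nonneg _) hst0
      calc |(FGraph a B v s (x t) - FGraph a B v₀ s (x t)) * (x t v s - x t v₀ s)
          + (x t v s - x t v₀ s) * (FGraph a B v s (x t) - FGraph a B v₀ s (x t))|
          ≤ (K * Real.sqrt (g t)) * Real.sqrt (g t)
            + Real.sqrt (g t) * (K * Real.sqrt (g t)) :=
            h1.trans (add_le_add h2 h3)
        _ = 2*K*(Real.sqrt (g t) * Real.sqrt (g t)) := by ring
        _ = 2*K*(g t) := by rw [hstst]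
    calc |g' t| ≤ ∑ v, ∑ s,
          |(FGraph a B v s (x t) - FGraph a B v₀ s (x t)) * (x t v s - x t v₀ s)
            + (x t v s - x t v₀ s) * (FGraph a B v s (x t) - FGraph a B v₀ s (x t))| := by
          rw [hg'def]
          refine (Finset.abs_sum_le_sum_abs _ _).trans
            (Finset.sum_le_sum fun v _ => Finset.abs_sum_le_sum_abs _ _)
      _ ≤ ∑ _v : Fin N, ∑ _s : Fin M, 2*K*(g t) :=
          Finset.sum_le_sum fun v _ => Finset.sum_le_sum fun s _ => hterm v s
      _ = (N:ℝ)*((M:ℝ)*(2*K*(g t))) := by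
          simp [Finset.sum_const, Finset.card_univ, nsmul_eq_mul]
      _ = (N:ℝ)*((M:ℝ)*(2*K)) * |g t| := by
          rw [abs_of_nonneg (hgnn t)]; ring
  have hg0all : ∀ t, g t = 0 := by
    intro t₀
    rcases le_total 0 t₀ with h | h
    · obtain ⟨K', _, hK'⟩ := hkey t₀
      exact gron_zero h hgder
        (fun t ht => hK' t ⟨le_trans (neg_nonpos.2 h) ht.1, ht.2⟩) hg0
    · obtain ⟨K', _, hK'⟩ := hkey (-t₀)
      have hder2 : ∀ t, HasDerivAt (fun τ => g (-τ)) (g' (-t) * (-1)) t := fun t =>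
        (hgder (-t)).comp t (hasDerivAt_neg t)
      have h2 := gron_zero (T := -t₀) (g := fun τ => g (-τ))
        (g' := fun t => g' (-t) * (-1)) (by linarith) hder2
        (fun t ht => by
          rw [abs_mul]
          simp only [abs_neg, abs_one, mul_one]
          exact hK' (-t) ⟨by linarith [ht.2], by linarith [ht.1]⟩)
        (by simpa using hg0)
      simpa using h2
  have hom : ∀ t v, x t v = x t v₀ := by
    intro t v
    funext s
    have h0 : (x t v s - x t v₀ s) * (x t v s - x t v₀ s) = 0 := by
      have h1 := hsq t v s
      have h2 := hg0all t
      nlinarith [mul_self_nonneg (x t v s - x t v₀ s)]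
    exact sub_eq_zero.mp (mul_self_eq_zero.mp h0)
  refine ⟨fun t v w => (hom t v).trans (hom t w).symm, fun v => ⟨?_, hinit v⟩⟩
  intro t s
  rw [hode t v s]
  have hxw : ∀ w r, x t w r = x t v r := fun w r => by
    rw [hom t w, ← hom t v]
  have hp : ∀ s', pGraph a B v s' (x t) = ∑ r, B₀ s' r * x t v r := by
    intro s'
    unfold pGraph
    rw [hB]
    refine Finset.sum_congr rfl fun r _ => ?_
    have hs : ∑ w, a v w * x t w r = (∑ w, a v w) * x t v r := by
      rw [Finset.sum_mul]
      exact Finset.sum_congr rfl fun w _ => by rw [hxw w r]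
    rw [hs, one_div, inv_mul_cancel_left₀ (hd v).ne']
  have hφ : phiGraph a B v (x t) = ∑ s', ∑ r, x t v s' * B₀ s' r * x t v r := by
    unfold phiGraph
    refine Finset.sum_congr rfl fun s' _ => ?_
    rw [hp s', Finset.mul_sum]
    exact Finset.sum_congr rfl fun r _ => by ring
  unfold FGraph
  rw [hp s, hφ]
end

section
/- Defection takes over in the classical prisoners' dilemma replicator dynamics: for B = !![1, 0; θ, 0] with θ > 1, let y : ℝ → Fin 2 → ℝ be differentiable, solve the classical replicator equation ẏ_s = y_s((B y)_s − yᵀ B y) for t ≥ 0, and satisfy y(0) ∈ Δ_2 with 0 < y(0) 0 < 1. Then y(t) 0 → 0 as t → ∞ (the frequency of cooperators vanishes; on Δ_2 the first component satisfies ẏ_0 = (1 − θ) y_0² (1 − y_0) < 0 in the interior). -/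
open Finset Filter

/-- Bilinear payoff form `zᵀ B w`. -/
def quadForm (B : Matrix (Fin 2) (Fin 2) ℝ) (z w : Fin 2 → ℝ) : ℝ :=
  ∑ s, ∑ r, z s * B s r * w r

/-- Membership in the 2-simplex. -/
def inSimplex2 (z : Fin 2 → ℝ) : Prop :=
  0 ≤ z 0 ∧ 0 ≤ z 1 ∧ z 0 + z 1 = 1

/-- Grönwall with zero initial data: `f ≡ 0` on `[a,b]`. -/
lemma gronwall_zero {f : ℝ → ℝ} {a b K : ℝ} (hf : Differentiable ℝ f)
    (hb : ∀ x ∈ Set.Icc a b, |deriv f x| ≤ K * |f x|) (ha : f a = 0) :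
    ∀ x ∈ Set.Icc a b, f x = 0 := by
  intro x hx
  have h := norm_le_gronwallBound_of_norm_deriv_right_le (f := f) (f' := deriv f)
    (δ := 0) (K := K) (ε := 0) (a := a) (b := b)
    hf.continuous.continuousOn
    (fun t _ => (hf t).hasDerivAt.hasDerivWithinAt)
    (by simp [ha])
    (fun t ht => by
      simpa [Real.norm_eq_abs] using hb t (Set.Ico_subset_Icc_self ht))
    x hx
  rw [gronwallBound_ε0_δ0] at h
  exact norm_le_zero_iff.mp h

theorem prisoners_dilemma_defection_takes_over (θ : ℝ) (hθ : 1 < θ)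
    (y : ℝ → Fin 2 → ℝ)
    (hdiff : ∀ s, Differentiable ℝ (fun t => y t s))
    (hode : ∀ t : ℝ, 0 ≤ t → ∀ s : Fin 2,
      deriv (fun τ => y τ s) t =
        y t s * ((∑ r, (!![1, 0; θ, 0] : Matrix (Fin 2) (Fin 2) ℝ) s r * y t r) -
          ∑ s', ∑ r, y t s' * (!![1, 0; θ, 0] : Matrix (Fin 2) (Fin 2) ℝ) s' r * y t r))
    (hinit : inSimplex2 (y 0))
    (h0 : 0 < y 0 0) (h1 : y 0 0 < 1) :
    Tendsto (fun t => y t 0) atTop (nhds 0) := by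
  obtain ⟨_, _, hsum0⟩ := hinit
  set u : ℝ → ℝ := fun t => y t 0 with hu_def
  set v : ℝ → ℝ := fun t => y t 1 with hv_def
  have du : Differentiable ℝ u := hdiff 0
  have dv : Differentiable ℝ v := hdiff 1
  have h0' : 0 < u 0 := h0
  have h1' : u 0 < 1 := h1
  have hsum0' : u 0 + v 0 = 1 := hsum0
  -- simplified ODEs
  have hu : ∀ t, 0 ≤ t →
      deriv u t = u t * (u t - (u t * u t + θ * (v t * u t))) := by
    intro t ht
    have h := hode t ht 0
    rw [h]
    simp only [Fin.sum_univ_two, Matrix.cons_val', Matrix.cons_val_zero, Matrix.cons_val_one,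
      Matrix.head_cons, Matrix.head_fin_const, Matrix.empty_val', Matrix.cons_val_fin_one,
      Matrix.of_apply]
    ring
  have hv : ∀ t, 0 ≤ t →
      deriv v t = v t * (θ * u t - (u t * u t + θ * (v t * u t))) := by
    intro t ht
    have h := hode t ht 1
    rw [h]
    simp only [Fin.sum_univ_two, Matrix.cons_val', Matrix.cons_val_zero, Matrix.cons_val_one,
      Matrix.head_cons, Matrix.head_fin_const, Matrix.empty_val', Matrix.cons_val_fin_one,
      Matrix.of_apply]
    ring
  -- the simplex sum is invariant
  have key_sum : ∀ t, 0 ≤ t → u t + v t = 1 := by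
    intro T hT
    set w : ℝ → ℝ := fun t => u t + v t - 1 with hw_def
    have dw : Differentiable ℝ w := (du.add dv).sub_const 1
    have hw : ∀ t, 0 ≤ t →
        deriv w t = -(u t * u t + θ * (v t * u t)) * w t := by
      intro t ht
      have hd : HasDerivAt w (deriv u t + deriv v t) t :=
        ((du t).hasDerivAt.add (dv t).hasDerivAt).sub_const 1
      rw [hd.deriv, hu t ht, hv t ht, hw_def]
      ring
    have hQc : ContinuousOn (fun t => u t * u t + θ * (v t * u t)) (Set.Icc 0 T) :=
      ((du.continuous.mul du.continuous).add
        (continuous_const.mul (dv.continuous.mul du.continuous))).continuousOn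
    obtain ⟨K, hK⟩ := isCompact_Icc.exists_bound_of_continuousOn hQc
    have hb : ∀ x ∈ Set.Icc (0:ℝ) T, |deriv w x| ≤ K * |w x| := by
      intro x hx
      rw [hw x hx.1, abs_mul, abs_neg]
      exact mul_le_mul_of_nonneg_right
        (by simpa [Real.norm_eq_abs] using hK x hx) (abs_nonneg _)
    have hw0 : w 0 = 0 := by simp [hw_def]; linarith
    have := gronwall_zero dw hb hw0 T ⟨hT, le_refl T⟩
    simp only [hw_def] at this
    linarith
  -- closed scalar ODE for u
  have hu' : ∀ t, 0 ≤ t → deriv u t = (1 - θ) * u t ^ 2 * (1 - u t) := by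
    intro t ht
    have hs := key_sum t ht
    have hveq : v t = 1 - u t := by linarith
    rw [hu t ht, hveq]
    ring
  -- positivity of u on [0, ∞)
  have hupos : ∀ t, 0 ≤ t → 0 < u t := by
    intro t ht
    by_contra hle
    push_neg at hle
    obtain ⟨t1, ht1mem, ht1⟩ : ∃ t1 ∈ Set.Icc (0:ℝ) t, u t1 = 0 := by
      have hsub := intermediate_value_Icc' ht du.continuous.continuousOn
      obtain ⟨t1, hmem, heq⟩ := hsub ⟨hle, h0'.le⟩
      exact ⟨t1, hmem, heq⟩
    set g : ℝ → ℝ := fun s => u (t1 - s) with hg_def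
    have dg : Differentiable ℝ g := du.comp (differentiable_const t1 |>.sub differentiable_id)
    obtain ⟨M, hM⟩ := isCompact_Icc.exists_bound_of_continuousOn
      (s := Set.Icc (0:ℝ) t1) du.continuous.continuousOn
    have hM0 : 0 ≤ M := le_trans (norm_nonneg _) (hM 0 ⟨le_refl 0, ht1mem.1⟩)
    have hb : ∀ s ∈ Set.Icc (0:ℝ) t1,
        |deriv g s| ≤ ((θ - 1) * (M * (1 + M))) * |g s| := by
      intro s hs
      have hτ : t1 - s ∈ Set.Icc (0:ℝ) t1 := ⟨by linarith [hs.2], by linarith [hs.1]⟩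
      have hder : HasDerivAt g (deriv u (t1 - s) * (-1)) s :=
        HasDerivAt.comp s (du (t1 - s)).hasDerivAt ((hasDerivAt_id s).const_sub t1)
      have hub : |u (t1 - s)| ≤ M := by
        simpa [Real.norm_eq_abs] using hM _ hτ
      have h1u : |1 - u (t1 - s)| ≤ 1 + M := by
        rcases abs_le.mp hub with ⟨hl, hr⟩
        rcases abs_cases (1 - u (t1 - s)) with ⟨he, _⟩ | ⟨he, _⟩ <;> linarith
      have hgs : |g s| = |u (t1 - s)| := by rw [hg_def]
      have habs := abs_nonneg (u (t1 - s))
      have habs2 := abs_nonneg (1 - u (t1 - s))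
      rw [hder.deriv, hu' (t1 - s) hτ.1, hgs, mul_neg_one, abs_neg, abs_mul, abs_mul,
        abs_of_nonpos (by linarith : (1:ℝ) - θ ≤ 0), abs_pow]
      have h2 : |u (t1 - s)| ^ 2 * |1 - u (t1 - s)| ≤ M * (1 + M) * |u (t1 - s)| := by
        calc |u (t1 - s)| ^ 2 * |1 - u (t1 - s)|
            = |u (t1 - s)| * (|u (t1 - s)| * |1 - u (t1 - s)|) := by ring
          _ ≤ |u (t1 - s)| * (M * (1 + M)) :=
              mul_le_mul_of_nonneg_left (mul_le_mul hub h1u habs2 hM0) habs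
          _ = M * (1 + M) * |u (t1 - s)| := by ring
      nlinarith [mul_le_mul_of_nonneg_left h2 (by linarith : (0:ℝ) ≤ θ - 1)]
    have hg0 : g 0 = 0 := by simpa [hg_def] using ht1
    have := gronwall_zero dg hb hg0 t1 ⟨ht1mem.1, le_refl t1⟩
    simp only [hg_def, sub_self] at this
    linarith
  -- u stays below 1 on [0, ∞)
  have hult1 : ∀ t, 0 ≤ t → u t < 1 := by
    intro t ht
    by_contra hle
    push_neg at hle
    obtain ⟨t1, ht1mem, ht1⟩ : ∃ t1 ∈ Set.Icc (0:ℝ) t, u t1 = 1 := by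
      have hsub := intermediate_value_Icc ht du.continuous.continuousOn
      obtain ⟨t1, hmem, heq⟩ := hsub ⟨h1'.le, hle⟩
      exact ⟨t1, hmem, heq⟩
    set g : ℝ → ℝ := fun s => 1 - u (t1 - s) with hg_def
    have dg : Differentiable ℝ g :=
      (differentiable_const 1).sub
        (du.comp (differentiable_const t1 |>.sub differentiable_id))
    obtain ⟨M, hM⟩ := isCompact_Icc.exists_bound_of_continuousOn
      (s := Set.Icc (0:ℝ) t1) du.continuous.continuousOn
    have hM0 : 0 ≤ M := le_trans (norm_nonneg _) (hM 0 ⟨le_refl 0, ht1mem.1⟩)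
    have hb : ∀ s ∈ Set.Icc (0:ℝ) t1,
        |deriv g s| ≤ ((θ - 1) * (M * M)) * |g s| := by
      intro s hs
      have hτ : t1 - s ∈ Set.Icc (0:ℝ) t1 := ⟨by linarith [hs.2], by linarith [hs.1]⟩
      have hinner : HasDerivAt (fun s : ℝ => u (t1 - s)) (deriv u (t1 - s) * (-1)) s :=
        HasDerivAt.comp s (du (t1 - s)).hasDerivAt ((hasDerivAt_id s).const_sub t1)
      have hder : HasDerivAt g (-(deriv u (t1 - s) * (-1))) s := hinner.const_sub 1
      have hub : |u (t1 - s)| ≤ M := by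
        simpa [Real.norm_eq_abs] using hM _ hτ
      have hgs : |g s| = |1 - u (t1 - s)| := by rw [hg_def]
      have habs := abs_nonneg (u (t1 - s))
      have habs2 := abs_nonneg (1 - u (t1 - s))
      rw [hder.deriv, hu' (t1 - s) hτ.1, hgs]
      have heq : -((1 - θ) * u (t1 - s) ^ 2 * (1 - u (t1 - s)) * -1)
          = (1 - θ) * u (t1 - s) ^ 2 * (1 - u (t1 - s)) := by ring
      rw [heq, abs_mul, abs_mul, abs_of_nonpos (by linarith : (1:ℝ) - θ ≤ 0), abs_pow]
      have h2 : |u (t1 - s)| ^ 2 * |1 - u (t1 - s)| ≤ M * M * |1 - u (t1 - s)| := by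
        have h3 : |u (t1 - s)| ^ 2 ≤ M * M := by nlinarith
        exact mul_le_mul_of_nonneg_right h3 habs2
      nlinarith [mul_le_mul_of_nonneg_left h2 (by linarith : (0:ℝ) ≤ θ - 1)]
    have hg0 : g 0 = 0 := by simp [hg_def, ht1]
    have := gronwall_zero dg hb hg0 t1 ⟨ht1mem.1, le_refl t1⟩
    simp only [hg_def, sub_self] at this
    linarith
  -- u is antitone on [0, ∞)
  have uanti : AntitoneOn u (Set.Ici 0) := by
    apply antitoneOn_of_deriv_nonpos (convex_Ici 0) du.continuous.continuousOn
      du.differentiableOn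
    intro t ht
    rw [interior_Ici] at ht
    rw [hu' t ht.le]
    have ha := hupos t ht.le
    have hb := hult1 t ht.le
    have h4 := mul_nonneg (mul_nonneg (by linarith : (0:ℝ) ≤ θ - 1)
      (sq_nonneg (u t))) (by linarith : (0:ℝ) ≤ 1 - u t)
    nlinarith [h4]
  -- convergence
  set g : ℝ → ℝ := fun t => u (max t 0) with hg_def
  have gant : Antitone g := fun s t hst =>
    uanti (le_max_right s 0) (le_max_right t 0) (max_le_max hst (le_refl 0))
  have gbdd : BddBelow (Set.range g) := by
    refine ⟨0, ?_⟩
    rintro x ⟨t, rfl⟩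
    exact (hupos _ (le_max_right t 0)).le
  have gtend : Tendsto g atTop (nhds (⨅ t, g t)) := tendsto_atTop_ciInf gant gbdd
  have hueq : g =ᶠ[atTop] u := by
    filter_upwards [eventually_ge_atTop (0:ℝ)] with t ht
    simp [hg_def, max_eq_left ht]
  have hL0 : (⨅ t, g t) = 0 := by
    have hLnonneg : 0 ≤ ⨅ t, g t := le_ciInf fun t => (hupos _ (le_max_right t 0)).le
    rcases hLnonneg.lt_or_eq with hL | hL
    · exfalso
      set L := ⨅ t, g t with hLdef
      set c := (θ - 1) * L ^ 2 * (1 - u 0) with hc_def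
      have hc0 : 0 < c := by
        apply mul_pos (mul_pos (by linarith) (by positivity))
        linarith
      have hLle : ∀ t, 0 ≤ t → L ≤ u t := by
        intro t ht
        have := ciInf_le gbdd t
        simpa [hg_def, max_eq_left ht] using this
      have φanti : AntitoneOn (fun t => u t + c * t) (Set.Ici 0) := by
        have hcont : ContinuousOn (fun t => u t + c * t) (Set.Ici 0) :=
          (du.continuous.add (continuous_const.mul continuous_id')).continuousOn
        have hdiffφ : DifferentiableOn ℝ (fun t => u t + c * t) (interior (Set.Ici 0)) :=
          (du.add ((differentiable_const c).mul differentiable_id)).differentiableOn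
        apply antitoneOn_of_deriv_nonpos (convex_Ici 0) hcont hdiffφ
        intro t ht
        rw [interior_Ici] at ht
        have hd : HasDerivAt (fun t => u t + c * t) (deriv u t + c * 1) t :=
          (du t).hasDerivAt.add (hasDerivAt_id' t |>.const_mul c)
        rw [hd.deriv, hu' t ht.le]
        have ha := hLle t ht.le
        have hb := uanti (Set.self_mem_Ici) (Set.mem_Ici.mpr ht.le) ht.le
        have p1 : L ^ 2 ≤ u t ^ 2 := by nlinarith
        have p2 : (1:ℝ) - u 0 ≤ 1 - u t := by linarith
        have e1 : L ^ 2 * (1 - u 0) ≤ u t ^ 2 * (1 - u t) :=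
          mul_le_mul p1 p2 (by linarith) (sq_nonneg _)
        have e2 := mul_le_mul_of_nonneg_left e1 (by linarith : (0:ℝ) ≤ θ - 1)
        nlinarith [e2, hc_def.le, hc_def.ge]
      have hTpos : 0 < (u 0 + 1) / c := div_pos (by linarith) hc0
      have hφ := φanti Set.self_mem_Ici (Set.mem_Ici.mpr hTpos.le) hTpos.le
      have hcT : c * ((u 0 + 1) / c) = u 0 + 1 := by field_simp
      have hub := hupos _ hTpos.le
      simp only [mul_zero, add_zero] at hφ
      rw [hcT] at hφ
      linarith
    · exact hL.symm
  rw [← hL0]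
  exact gtend.congr' hueq
end

section
/- Coexistence dynamics: for the payoff matrix B = !![0, 1; 1, 0], let y : ℝ → Fin 2 → ℝ be differentiable, solve the classical replicator equation ẏ_s = y_s((B y)_s − yᵀ B y) for t ≥ 0, and satisfy y(0) ∈ Δ_2 with 0 < y(0) 0 < 1. Then y(t) 0 → 1/2 as t → ∞: every interior solution converges to the mixed equilibrium x* = (1/2, 1/2). (On Δ_2 the first component satisfies ẏ_0 = y_0 (1 − y_0)(1 − 2 y_0).) -/
open Finset Filter

/-- Gronwall-type uniqueness: if `f' = c · f` on `[0, T]` with `c` continuous and `f 0 = 0`,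
then `f T = 0`. -/
lemma eq_zero_of_deriv_eq_mul {f c : ℝ → ℝ} {T : ℝ} (hT : 0 ≤ T)
    (hf : ∀ t ∈ Set.Icc 0 T, HasDerivAt f (c t * f t) t)
    (hc : ContinuousOn c (Set.Icc 0 T)) (h0 : f 0 = 0) : f T = 0 := by
  obtain ⟨K, hK⟩ := (isCompact_Icc (a := (0:ℝ)) (b := T)).exists_bound_of_continuousOn hc
  have hfc : ContinuousOn f (Set.Icc 0 T) := fun x hx =>
    (hf x hx).continuousAt.continuousWithinAt
  have key := norm_le_gronwallBound_of_norm_deriv_right_le (f := f)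
      (f' := fun t => c t * f t) (δ := 0) (K := K) (ε := 0) (a := 0) (b := T) hfc
      (fun x hx => (hf x (Set.mem_Icc_of_Ico hx)).hasDerivWithinAt)
      (by simp [h0])
      (fun x hx => by
        have h1 : ‖c x * f x‖ ≤ K * ‖f x‖ := by
          rw [norm_mul]
          exact mul_le_mul_of_nonneg_right (hK x (Set.mem_Icc_of_Ico hx)) (norm_nonneg _)
        simpa using h1)
  have hT' := key T (Set.mem_Icc.2 ⟨hT, le_refl T⟩)
  rw [gronwallBound_ε0_δ0] at hT'
  exact norm_le_zero_iff.mp hT'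

theorem coexistence_dynamics
    (y : ℝ → Fin 2 → ℝ)
    (hdiff : ∀ s, Differentiable ℝ (fun t => y t s))
    (hode : ∀ t : ℝ, 0 ≤ t → ∀ s : Fin 2,
      deriv (fun τ => y τ s) t =
        y t s * ((∑ r, (!![0, 1; 1, 0] : Matrix (Fin 2) (Fin 2) ℝ) s r * y t r) -
          ∑ s', ∑ r, y t s' * (!![0, 1; 1, 0] : Matrix (Fin 2) (Fin 2) ℝ) s' r * y t r))
    (hinit : inSimplex2 (y 0))
    (h0 : 0 < y 0 0) (h1 : y 0 0 < 1) :
    Tendsto (fun t => y t 0) atTop (nhds (1/2)) := by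
  set u : ℝ → ℝ := fun t => y t 0 with hu_def
  set v : ℝ → ℝ := fun t => y t 1 with hv_def
  have hu : Differentiable ℝ u := hdiff 0
  have hv : Differentiable ℝ v := hdiff 1
  -- simplified ODEs
  have hdu : ∀ t, 0 ≤ t →
      HasDerivAt u (u t * (v t - (u t * v t + v t * u t))) t := by
    intro t ht
    have h := hode t ht 0
    simp [Fin.sum_univ_two] at h
    have h2 := (hu t).hasDerivAt
    rwa [show deriv u t = u t * (v t - (u t * v t + v t * u t)) from h] at h2
  have hdv : ∀ t, 0 ≤ t →
      HasDerivAt v (v t * (u t - (u t * v t + v t * u t))) t := by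
    intro t ht
    have h := hode t ht 1
    simp [Fin.sum_univ_two] at h
    have h2 := (hv t).hasDerivAt
    rwa [show deriv v t = v t * (u t - (u t * v t + v t * u t)) from h] at h2
  -- Step 1: the simplex sum is conserved: u + v = 1 for t ≥ 0.
  have hsum : ∀ t, 0 ≤ t → u t + v t = 1 := by
    intro T hT
    have hf : ∀ t ∈ Set.Icc (0:ℝ) T,
        HasDerivAt (fun t => u t + v t - 1)
          ((-(2 * u t * v t)) * (u t + v t - 1)) t := by
      intro t ht
      have h2 := ((hdu t ht.1).add (hdv t ht.1)).sub_const 1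
      refine h2.congr_deriv ?_
      ring
    have hc : ContinuousOn (fun t => -(2 * u t * v t)) (Set.Icc 0 T) :=
      (((continuous_const.mul hu.continuous).mul hv.continuous).neg).continuousOn
    have h00 : u 0 + v 0 - 1 = 0 := by
      have := hinit.2.2
      simp only [hu_def, hv_def]
      linarith
    have := eq_zero_of_deriv_eq_mul hT hf hc h00
    linarith
  -- the ODE for u alone
  have hdu' : ∀ t, 0 ≤ t →
      HasDerivAt u (u t * (1 - u t) * (1 - 2 * u t)) t := by
    intro t ht
    have hv1 : v t = 1 - u t := by have := hsum t ht; linarith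
    have h2 := hdu t ht
    rw [hv1] at h2
    convert h2 using 1
    ring
  -- Step 2: h = u(1-u) stays positive.
  set h : ℝ → ℝ := fun t => u t * (1 - u t) with hh_def
  have hdh : ∀ t, 0 ≤ t → HasDerivAt h ((1 - 2 * u t)^2 * h t) t := by
    intro t ht
    have h2 := (hdu' t ht).mul ((hdu' t ht).const_sub 1)
    refine h2.congr_deriv ?_
    simp only [hh_def]
    ring
  have hh0 : 0 < h 0 := by
    simp only [hh_def]
    nlinarith
  have hhpos : ∀ t, 0 ≤ t → 0 < h t := by
    intro t ht
    by_contra hle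
    push_neg at hle
    have hcont : ContinuousOn h (Set.Icc 0 t) :=
      (hu.continuous.mul (continuous_const.sub hu.continuous)).continuousOn
    have h0mem : (0:ℝ) ∈ Set.Icc (h t) (h 0) := ⟨hle, le_of_lt hh0⟩
    obtain ⟨t2, ht2mem, ht2⟩ := intermediate_value_Icc' ht hcont h0mem
    have ht2nonneg : 0 ≤ t2 := ht2mem.1
    have hrev : ∀ s ∈ Set.Icc (0:ℝ) t2,
        HasDerivAt (fun s => h (t2 - s))
          ((-(1 - 2 * u (t2 - s))^2) * h (t2 - s)) s := by
      intro s hs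
      have hmem : 0 ≤ t2 - s := by have := hs.2; linarith
      have hinner : HasDerivAt (fun s : ℝ => t2 - s) (-1) s := by
        simpa using (hasDerivAt_id s).const_sub t2
      have h2 := (hdh (t2 - s) hmem).comp s hinner
      refine h2.congr_deriv ?_
      ring
    have hcrev : ContinuousOn (fun s => -(1 - 2 * u (t2 - s))^2) (Set.Icc 0 t2) := by
      have hcu : Continuous (fun s : ℝ => u (t2 - s)) :=
        hu.continuous.comp (continuous_const.sub continuous_id)
      exact (((continuous_const.sub (continuous_const.mul hcu)).pow 2).neg).continuousOn
    have hzero := eq_zero_of_deriv_eq_mul ht2nonneg hrev hcrev (by simpa using ht2)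
    simp only [sub_self] at hzero
    linarith
  -- Step 3: Lyapunov function V = (u - 1/2)²
  set V : ℝ → ℝ := fun t => (u t - 1/2)^2 with hV_def
  have hdV : ∀ t, 0 ≤ t → HasDerivAt V (-(4 * h t) * V t) t := by
    intro t ht
    have h2 := ((hdu' t ht).sub_const (1/2)).pow 2
    refine h2.congr_deriv ?_
    simp only [hV_def, hh_def]
    ring
  have hVcont : Continuous V := by
    apply Continuous.pow
    exact hu.continuous.sub continuous_const
  have hVanti : AntitoneOn V (Set.Ici 0) := by
    apply antitoneOn_of_deriv_nonpos (convex_Ici 0) hVcont.continuousOn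
    · exact (((hu.sub_const (1/2)).pow 2)).differentiableOn
    · intro x hx
      rw [interior_Ici] at hx
      rw [(hdV x (le_of_lt hx)).deriv]
      have h1 := hhpos x (le_of_lt hx)
      have h2 : 0 ≤ V x := sq_nonneg _
      nlinarith
  have hVle : ∀ t, 0 ≤ t → V t ≤ V 0 :=
    fun t ht => hVanti Set.self_mem_Ici ht ht
  set m : ℝ := 1/4 - V 0 with hm_def
  have hm : 0 < m := by
    simp only [hm_def, hV_def]
    nlinarith
  have hhm : ∀ t, 0 ≤ t → m ≤ h t := by
    intro t ht
    have h1 : h t = 1/4 - V t := by simp only [hh_def, hV_def]; ring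
    have h2 := hVle t ht
    rw [h1, hm_def]
    linarith
  -- Step 4: exponential decay of V
  set W : ℝ → ℝ := fun t => V t * Real.exp (4 * m * t) with hW_def
  have hdW : ∀ t, 0 ≤ t → HasDerivAt W
      (-(4 * h t) * V t * Real.exp (4 * m * t) +
        V t * (Real.exp (4 * m * t) * (4 * m))) t := by
    intro t ht
    have hexp : HasDerivAt (fun t : ℝ => Real.exp (4 * m * t))
        (Real.exp (4 * m * t) * (4 * m)) t := by
      have := (((hasDerivAt_id t).const_mul (4 * m))).exp
      simpa using this
    exact (hdV t ht).mul hexp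
  have hWanti : AntitoneOn W (Set.Ici 0) := by
    apply antitoneOn_of_deriv_nonpos (convex_Ici 0)
    · exact (hVcont.mul (Real.continuous_exp.comp
        (continuous_const.mul continuous_id))).continuousOn
    · apply Differentiable.differentiableOn
      exact ((hu.sub_const (1/2)).pow 2).mul
        (Real.differentiable_exp.comp ((differentiable_const _).mul differentiable_id))
    · intro x hx
      rw [interior_Ici] at hx
      rw [(hdW x (le_of_lt hx)).deriv]
      have h1 := hhm x (le_of_lt hx)
      have h2 : 0 ≤ V x := sq_nonneg _
      have h3 : 0 < Real.exp (4 * m * x) := Real.exp_pos _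
      have h4 : 0 ≤ V x * Real.exp (4 * m * x) := mul_nonneg h2 h3.le
      have h5 : m - h x ≤ 0 := by linarith
      nlinarith [mul_nonpos_of_nonneg_of_nonpos h4 h5]
  have hVbound : ∀ t, 0 ≤ t → V t ≤ V 0 * Real.exp (-(4 * m * t)) := by
    intro t ht
    have h1 : W t ≤ W 0 := hWanti Set.self_mem_Ici ht ht
    have h2 : W 0 = V 0 := by simp [hW_def]
    have h3 : 0 < Real.exp (4 * m * t) := Real.exp_pos _
    have h4 : V t * Real.exp (4 * m * t) ≤ V 0 := by rw [← h2]; exact h1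
    rw [Real.exp_neg]
    calc V t = V t * Real.exp (4 * m * t) * (Real.exp (4 * m * t))⁻¹ := by
              field_simp
      _ ≤ V 0 * (Real.exp (4 * m * t))⁻¹ :=
              mul_le_mul_of_nonneg_right h4 (by positivity)
  -- conclude
  have hVtend : Tendsto V atTop (nhds 0) := by
    apply squeeze_zero' (g := fun t => V 0 * Real.exp (-(4 * m * t)))
    · exact Eventually.of_forall fun t => sq_nonneg _
    · filter_upwards [eventually_ge_atTop (0:ℝ)] with t ht
      exact hVbound t ht
    · have h1 : Tendsto (fun t : ℝ => 4 * m * t) atTop atTop := by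
        apply Tendsto.const_mul_atTop (by positivity) tendsto_id
      have h2 : Tendsto (fun t : ℝ => Real.exp (-(4 * m * t))) atTop (nhds 0) :=
        Real.tendsto_exp_neg_atTop_nhds_zero.comp h1
      simpa using h2.const_mul (V 0)
  have habs : Tendsto (fun t => |u t - 1/2|) atTop (nhds 0) := by
    have h1 : Tendsto (fun t => Real.sqrt (V t)) atTop (nhds 0) := by
      have := (Real.continuous_sqrt.tendsto' 0 0 (by simp)).comp hVtend
      exact this
    convert h1 using 2 with t
    rw [hV_def]
    exact (Real.sqrt_sq_eq_abs _).symm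
  rw [tendsto_iff_dist_tendsto_zero]
  simpa [Real.dist_eq] using habs
end
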